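/- Let the profile graph of an approval profile be K_{d,d}-free, where d ≥ 1 and |C| = n. Then the number of voters v ∈ V with |A_v| ≥ d is at most (d − 1)·C(n, d), where C(n, d) denotes the binomial coefficient. -/
import Mathlib


open Finset

/-- The profile graph is `K_{d,d}`-free: there do not exist `d` voters and `d` candidates
such that each of the `d` voters approves all `d` candidates. -/
def KddFree {C V : Type*} (A : V → Finset C) (d : ℕ) : Prop :=
  ¬ ∃ (D : Finset V) (E : Finset C), D.card = d ∧ E.card = d ∧ ∀ v ∈ D, E ⊆ A v

/-- In a `K_{d,d}`-free profile with `n` candidates, the number of voters approving at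
least `d` candidates is at most `(d-1)·C(n,d)`. -/
theorem stmt_9 {C V : Type*} [Fintype C] [Fintype V]
    (A : V → Finset C) (d : ℕ) (hd : 1 ≤ d) (hfree : KddFree A d) :
    (Finset.univ.filter fun v : V => d ≤ (A v).card).card ≤
      (d - 1) * (Fintype.card C).choose d := by
  classical
  set P := (Finset.univ : Finset C).powersetCard d with hP
  have hsub : (Finset.univ.filter fun v : V => d ≤ (A v).card) ⊆
      P.biUnion (fun E => Finset.univ.filter fun v : V => E ⊆ A v) := by
    intro v hv
    simp only [mem_filter, mem_univ, true_and] at hv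
    obtain ⟨E, hE, hEcard⟩ := Finset.exists_subset_card_eq hv
    refine Finset.mem_biUnion.2 ⟨E, ?_, ?_⟩
    · simp [hP, Finset.mem_powersetCard, hEcard]
    · simp [hE]
  calc (Finset.univ.filter fun v : V => d ≤ (A v).card).card
      ≤ (P.biUnion (fun E => Finset.univ.filter fun v : V => E ⊆ A v)).card :=
        Finset.card_le_card hsub
    _ ≤ ∑ E ∈ P, (Finset.univ.filter fun v : V => E ⊆ A v).card :=
        Finset.card_biUnion_le
    _ ≤ ∑ _E ∈ P, (d - 1) := by
        refine Finset.sum_le_sum fun E hE => ?_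
        simp only [hP, Finset.mem_powersetCard] at hE
        by_contra h
        push_neg at h
        have hge : d ≤ (Finset.univ.filter fun v : V => E ⊆ A v).card := by
          omega
        obtain ⟨D, hD, hDcard⟩ := Finset.exists_subset_card_eq hge
        exact hfree ⟨D, E, hDcard, hE.2, fun v hv => by
          have := hD hv; simp only [mem_filter] at this; exact this.2⟩
    _ = (d - 1) * (Fintype.card C).choose d := by
        simp [hP, Finset.card_powersetCard, mul_comm]
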